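/- Local maxima of DLB: Let n be an even positive integer and ℓ ∈ [1..n/2] an integer. Let x ∈ {0,1}^n be any search point with x_i = 1 for all i ∈ [1..2ℓ−2], x_{2ℓ−1} = x_{2ℓ} = 0, and arbitrary bits x_{2ℓ+1},…,x_n. Then x is a local maximum of DLB with respect to Hamming distance 1: for every y ∈ {0,1}^n differing from x in exactly one bit position, DLB(y) ≤ DLB(x). -/
import Mathlib


/-- Number of leading ones among positions `0, …, n-1` of `x : ℕ → Bool`. -/
def LOn (n : ℕ) (x : ℕ → Bool) : ℕ :=
  ((Finset.range n).filter (fun r => ∀ s ≤ r, x s = true)).card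

/-- The DeceivingLeadingBlocks function (0-based encoding of bit positions):
blocks are `(x (2ℓ), x (2ℓ+1))`; if `x` is not the all-ones string and `m` is the
index of the first non-`11` block, then the value is `2m+1` for a `00` critical
block, `2m` for a `01`/`10` critical block, and `n` for the all-ones string. -/
def DLBn (n : ℕ) (x : ℕ → Bool) : ℕ :=
  if ∀ i < n, x i = true then n
  else if x (2 * (LOn n x / 2)) = false ∧ x (2 * (LOn n x / 2) + 1) = false
    then 2 * (LOn n x / 2) + 1
    else 2 * (LOn n x / 2)

/-- The Honest Leading Blocks function with parameter `δ`:
`HLB_δ(x) = 2m` if `DLB(x) = 2m+1`, `HLB_δ(x) = 2m+2-δ` if `DLB(x) = 2m` (for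
`m ∈ [0..n/2-1]`), and `HLB_δ(x) = n` if `DLB(x) = n`. -/
noncomputable def HLBn (n : ℕ) (δ : ℝ) (x : ℕ → Bool) : ℝ :=
  if ∀ i < n, x i = true then (n : ℝ)
  else if x (2 * (LOn n x / 2)) = false ∧ x (2 * (LOn n x / 2) + 1) = false
    then (2 * (LOn n x / 2) : ℕ)
    else (2 * (LOn n x / 2) : ℕ) + 2 - δ

/-- Extend a bit string `x : Fin n → Bool` to all of `ℕ` (by `false` outside). -/
def toNatFun {n : ℕ} (x : Fin n → Bool) : ℕ → Bool :=
  fun i => if h : i < n then x ⟨i, h⟩ else false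

/-- The LeadingOnes value of a bit string of length `n`. -/
def LO {n : ℕ} (x : Fin n → Bool) : ℕ := LOn n (toNatFun x)

/-- The DeceivingLeadingBlocks value of a bit string of length `n`. -/
def DLB {n : ℕ} (x : Fin n → Bool) : ℕ := DLBn n (toNatFun x)

/-- The Honest Leading Blocks value (parameter `δ`) of a bit string of length `n`. -/
noncomputable def HLB {n : ℕ} (δ : ℝ) (x : Fin n → Bool) : ℝ := HLBn n δ (toNatFun x)


lemma LOn_eq (n k : ℕ) (hk : k < n) (x : ℕ → Bool)
    (h1 : ∀ s < k, x s = true) (h2 : x k = false) : LOn n x = k := by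
  unfold LOn
  have hset : (Finset.range n).filter (fun r => ∀ s ≤ r, x s = true)
      = Finset.range k := by
    ext r
    simp only [Finset.mem_filter, Finset.mem_range]
    constructor
    · rintro ⟨hr, h⟩
      by_contra hc
      push_neg at hc
      have := h k hc
      rw [h2] at this
      exact Bool.false_ne_true this
    · intro hr
      exact ⟨by omega, fun s hs => h1 s (by omega)⟩
  rw [hset, Finset.card_range]

lemma DLBn_eq (n k : ℕ) (hk : k < n) (x : ℕ → Bool)
    (h1 : ∀ s < k, x s = true) (h2 : x k = false) :
    DLBn n x = if x (2 * (k / 2)) = false ∧ x (2 * (k / 2) + 1) = false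
      then 2 * (k / 2) + 1 else 2 * (k / 2) := by
  unfold DLBn
  rw [LOn_eq n k hk x h1 h2, if_neg]
  intro h
  have := h k hk
  rw [h2] at this
  exact Bool.false_ne_true this

/-- **Local maxima of DLB.** Let `n` be an even positive integer and
`ℓ ∈ [1..n/2]`. Every search point `x` whose first `2ℓ-2` bits are `1`, whose
bits at (1-based) positions `2ℓ-1` and `2ℓ` are `0`, and whose remaining bits
are arbitrary, is a local maximum of `DLB` with respect to Hamming distance 1:
every `y` obtained from `x` by flipping exactly one bit satisfies
`DLB y ≤ DLB x`. -/
theorem DLB_local_maximum (n ℓ : ℕ) (hn : 0 < n) (he : Even n)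
    (hℓ1 : 1 ≤ ℓ) (hℓ2 : 2 * ℓ ≤ n)
    (x : Fin n → Bool)
    (hpre : ∀ i : Fin n, (i : ℕ) < 2 * ℓ - 2 → x i = true)
    (h1 : x ⟨2 * ℓ - 2, by omega⟩ = false)
    (h2 : x ⟨2 * ℓ - 1, by omega⟩ = false) :
    ∀ i : Fin n, DLB (Function.update x i (!(x i))) ≤ DLB x := by
  intro i
  obtain ⟨k, rfl⟩ : ∃ k, ℓ = k + 1 := ⟨ℓ - 1, by omega⟩
  set y := Function.update x i (!(x i)) with hy
  have hn2k : 2 * k + 1 < n := by omega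
  have hX : ∀ s (hs : s < n), toNatFun x s = x ⟨s, hs⟩ := by
    intro s hs; simp [toNatFun, hs]
  have hXlt : ∀ s, s < 2 * k → toNatFun x s = true := by
    intro s hs
    rw [hX s (by omega)]
    exact hpre ⟨s, by omega⟩ (by simp; omega)
  have hX1 : toNatFun x (2 * k) = false := by
    rw [hX (2 * k) (by omega)]
    have e : (⟨2 * k, by omega⟩ : Fin n) = ⟨2 * (k + 1) - 2, by omega⟩ := by
      simp only [Fin.mk.injEq]; omega
    rw [e]; exact h1
  have hX2 : toNatFun x (2 * k + 1) = false := by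
    rw [hX (2 * k + 1) (by omega)]
    have e : (⟨2 * k + 1, by omega⟩ : Fin n) = ⟨2 * (k + 1) - 1, by omega⟩ := by
      simp only [Fin.mk.injEq]; omega
    rw [e]; exact h2
  have hYne : ∀ s, s ≠ (i : ℕ) → toNatFun y s = toNatFun x s := by
    intro s hs
    simp only [toNatFun]
    split
    · next h =>
      rw [hy, Function.update_of_ne]
      intro hc
      exact hs (congrArg Fin.val hc)
    · rfl
  have hYi : toNatFun y (i : ℕ) = !(x i) := by
    simp only [toNatFun, dif_pos i.isLt]
    rw [hy]
    have : (⟨(i : ℕ), i.isLt⟩ : Fin n) = i := by simp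
    rw [this, Function.update_self]
  -- DLB x = 2k+1
  have hDLBx : DLB x = 2 * k + 1 := by
    unfold DLB
    rw [DLBn_eq n (2 * k) (by omega) _ hXlt hX1]
    have hq : 2 * k / 2 = k := by omega
    rw [hq, if_pos ⟨hX1, hX2⟩]
  rw [hDLBx]
  unfold DLB
  rcases lt_trichotomy (i : ℕ) (2 * k) with hi | hi | hi
  · -- flip a leading one
    have hYlt : ∀ s, s < (i : ℕ) → toNatFun y s = true := by
      intro s hs
      rw [hYne s (by omega)]
      exact hXlt s (by omega)
    have hYif : toNatFun y (i : ℕ) = false := by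
      rw [hYi, hpre i (by omega)]; rfl
    rw [DLBn_eq n (i : ℕ) (by omega) _ hYlt hYif]
    have hcond : ¬(toNatFun y (2 * ((i : ℕ) / 2)) = false ∧
        toNatFun y (2 * ((i : ℕ) / 2) + 1) = false) := by
      rcases Nat.even_or_odd (i : ℕ) with ⟨m, hm⟩ | ⟨m, hm⟩
      · -- i = 2m, the next bit is still 1
        have hq : (i : ℕ) / 2 = m := by omega
        rintro ⟨-, hb⟩
        rw [hq] at hb
        have : toNatFun y (2 * m + 1) = true := by
          rw [hYne _ (by omega)]
          exact hXlt _ (by omega)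
        rw [this] at hb
        simp at hb
      · -- i = 2m+1, the previous bit is still 1
        have hq : (i : ℕ) / 2 = m := by omega
        rintro ⟨ha, -⟩
        rw [hq] at ha
        have : toNatFun y (2 * m) = true := by
          rw [hYne _ (by omega)]
          exact hXlt _ (by omega)
        rw [this] at ha
        simp at ha
    rw [if_neg hcond]
    omega
  · -- flip bit 2k (first zero)
    have hYlt : ∀ s, s < 2 * k + 1 → toNatFun y s = true := by
      intro s hs
      rcases Nat.lt_or_ge s (2 * k) with h | h
      · rw [hYne s (by omega)]; exact hXlt s h
      · have hs' : s = (i : ℕ) := by omega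
        rw [hs', hYi]
        have : x i = false := by
          have e : i = (⟨2 * (k + 1) - 2, by omega⟩ : Fin n) := by
            apply Fin.ext; simp; omega
          rw [e]; exact h1
        rw [this]; rfl
    have hYf : toNatFun y (2 * k + 1) = false := by
      rw [hYne _ (by omega)]; exact hX2
    rw [DLBn_eq n (2 * k + 1) (by omega) _ hYlt hYf]
    have hq : (2 * k + 1) / 2 = k := by omega
    rw [hq, if_neg]
    · omega
    · rintro ⟨ha, -⟩
      rw [hYlt (2 * k) (by omega)] at ha
      simp at ha
  · rcases Nat.lt_or_ge (2 * k + 1) (i : ℕ) with hi' | hi'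
    · -- flip a bit beyond position 2k+1 : DLB unchanged
      have hYlt : ∀ s, s < 2 * k → toNatFun y s = true := by
        intro s hs
        rw [hYne s (by omega)]; exact hXlt s hs
      have hYf : toNatFun y (2 * k) = false := by
        rw [hYne _ (by omega)]; exact hX1
      rw [DLBn_eq n (2 * k) (by omega) _ hYlt hYf]
      have hq : 2 * k / 2 = k := by omega
      rw [hq]
      split <;> omega
    · -- flip bit 2k+1
      have hii : (i : ℕ) = 2 * k + 1 := by omega
      have hYlt : ∀ s, s < 2 * k → toNatFun y s = true := by
        intro s hs
        rw [hYne s (by omega)]; exact hXlt s hs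
      have hYf : toNatFun y (2 * k) = false := by
        rw [hYne _ (by omega)]; exact hX1
      rw [DLBn_eq n (2 * k) (by omega) _ hYlt hYf]
      have hq : 2 * k / 2 = k := by omega
      rw [hq, if_neg]
      · omega
      · rintro ⟨-, hb⟩
        have : toNatFun y (2 * k + 1) = true := by
          rw [← hii, hYi]
          have : x i = false := by
            have e : i = (⟨2 * (k + 1) - 1, by omega⟩ : Fin n) := by
              apply Fin.ext; simp; omega
            rw [e]; exact h2
          rw [this]; rfl
        rw [this] at hb
        simp at hb
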